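/- Let f : ℝ^d → ℝ and μ : ℝ^d → ℝ be twice continuously differentiable at x with f(x) > 0. Define, for r > 0, m(r) = [∫_{S^{d−1}} μ(x + rξ) f(x + rξ) ν(dξ)] / [∫_{S^{d−1}} f(x + rξ) ν(dξ)], the sphere-averaged regression value at radius r. Then as r → 0, m(r) = μ(x) + [f(x)·tr(μ''(x)) + 2·∇μ(x)ᵀ∇f(x)] / (2·d·f(x)) · r² + o(r²). -/

import Mathlib

open MeasureTheory Filter Asymptotics

set_option maxHeartbeats 1000000
section SphereExpAll
open Metric Set

namespace SphereExp

variable {n : ℕ}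

local notation "E" => EuclideanSpace ℝ (Fin (n+1))

lemma sum_sq_eq_one_of_mem_sphere {ξ : E} (hξ : ξ ∈ sphere (0:E) 1) :
    ∑ k, (ξ k)^2 = 1 := by
  rw [mem_sphere_zero_iff_norm, EuclideanSpace.norm_eq] at hξ
  have h0 : ∀ k : Fin (n+1), ‖ξ k‖^2 = (ξ k)^2 := fun k => by
    rw [Real.norm_eq_abs, sq_abs]
  have := congrArg (fun t : ℝ => t^2) hξ
  simp only [one_pow] at this
  rw [Real.sq_sqrt (Finset.sum_nonneg fun k _ => sq_nonneg _)] at this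
  simpa [h0] using this


/-- coordinate reflection as an isometry equiv -/
noncomputable def reflEquiv (i : Fin (n+1)) : (E) ≃ᵢ (E) where
  toFun ξ := WithLp.toLp 2 (fun j => if j = i then -ξ j else ξ j)
  invFun ξ := WithLp.toLp 2 (fun j => if j = i then -ξ j else ξ j)
  left_inv ξ := by ext j; by_cases h : j = i <;> simp [h]
  right_inv ξ := by ext j; by_cases h : j = i <;> simp [h]
  isometry_toFun := by
    apply Isometry.of_dist_eq
    intro ξ η
    rw [EuclideanSpace.dist_eq, EuclideanSpace.dist_eq]
    congr 1
    refine Finset.sum_congr rfl fun j _ => ?_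
    by_cases h : j = i <;> simp [h, Real.dist_eq, abs_sub_comm, neg_sub_neg]

lemma reflEquiv_apply (i j : Fin (n+1)) (ξ : E) :
    reflEquiv i ξ j = if j = i then -ξ j else ξ j := rfl

lemma reflEquiv_norm (i : Fin (n+1)) (ξ : E) : ‖reflEquiv i ξ‖ = ‖ξ‖ := by
  rw [EuclideanSpace.norm_eq, EuclideanSpace.norm_eq]
  congr 1
  refine Finset.sum_congr rfl fun j _ => ?_
  by_cases h : j = i <;> simp [reflEquiv_apply, h]

/-- coordinate swap as an isometry equiv -/
noncomputable def swapEquiv (i j : Fin (n+1)) : (E) ≃ᵢ (E) where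
  toFun ξ := WithLp.toLp 2 (fun k => ξ (Equiv.swap i j k))
  invFun ξ := WithLp.toLp 2 (fun k => ξ (Equiv.swap i j k))
  left_inv ξ := by ext k; show ξ (Equiv.swap i j (Equiv.swap i j k)) = ξ k; rw [Equiv.swap_apply_self]
  right_inv ξ := by ext k; show ξ (Equiv.swap i j (Equiv.swap i j k)) = ξ k; rw [Equiv.swap_apply_self]
  isometry_toFun := by
    apply Isometry.of_dist_eq
    intro ξ η
    rw [EuclideanSpace.dist_eq, EuclideanSpace.dist_eq]
    congr 1
    exact Fintype.sum_equiv (Equiv.swap i j) _ _ (fun k => rfl)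

lemma swapEquiv_apply (i j k : Fin (n+1)) (ξ : E) :
    swapEquiv i j ξ k = ξ (Equiv.swap i j k) := rfl

lemma swapEquiv_norm (i j : Fin (n+1)) (ξ : E) : ‖swapEquiv i j ξ‖ = ‖ξ‖ := by
  rw [EuclideanSpace.norm_eq, EuclideanSpace.norm_eq]
  congr 1
  exact Fintype.sum_equiv (Equiv.swap i j) _ _ (fun k => rfl)

lemma integral_comp_isometry (e : (E) ≃ᵢ (E)) (he : ∀ ξ : E, ‖e ξ‖ = ‖ξ‖) (g : E → ℝ) :
    (∫ ξ in sphere (0:E) 1, g (e ξ) ∂(μH[(n:ℝ)] : Measure E))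
      = ∫ ξ in sphere (0:E) 1, g ξ ∂(μH[(n:ℝ)] : Measure E) := by
  have hpre : e ⁻¹' (sphere (0:E) 1) = sphere (0:E) 1 := by
    ext ξ
    simp only [Set.mem_preimage, mem_sphere_zero_iff_norm, he]
  have h1 := (e.measurePreserving_hausdorffMeasure (n:ℝ)).restrict_preimage
    (Metric.isClosed_sphere.measurableSet : MeasurableSet (sphere (0:E) 1))
  rw [hpre] at h1
  exact h1.integral_comp e.toHomeomorph.measurableEmbedding g


lemma hausdorff_sphere_pos : 0 < (μH[(n:ℝ)] : Measure E) (sphere (0:E) 1) := by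
  classical
  set π : E → (Fin n → ℝ) := fun ξ j => ξ (Fin.castSucc j) with hπdef
  have hπ : LipschitzWith 1 π := by
    apply LipschitzWith.of_dist_le_mul
    intro ξ η
    rw [NNReal.coe_one, one_mul]
    rw [dist_pi_le_iff dist_nonneg]
    intro j
    have : dist (ξ (Fin.castSucc j)) (η (Fin.castSucc j))
        = Real.sqrt (dist (ξ (Fin.castSucc j)) (η (Fin.castSucc j)) ^ 2) :=
      (Real.sqrt_sq dist_nonneg).symm
    rw [EuclideanSpace.dist_eq]
    calc dist (π ξ j) (π η j) = Real.sqrt (dist (ξ (Fin.castSucc j)) (η (Fin.castSucc j)) ^ 2) := this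
    _ ≤ Real.sqrt (∑ k, dist (ξ k) (η k) ^ 2) := by
        apply Real.sqrt_le_sqrt
        exact Finset.single_le_sum (f := fun k => dist (ξ k) (η k) ^ 2)
          (fun k _ => sq_nonneg _) (Finset.mem_univ _)
  set C : Set (Fin n → ℝ) := closedBall 0 (1/(n+1)) with hCdef
  have hsub : C ⊆ π '' (sphere (0:E) 1) := by
    intro u hu
    have hcoord : ∀ j, (u j)^2 ≤ (1/(n+1):ℝ)^2 := by
      intro j
      have h1 : dist (u j) 0 ≤ dist u 0 := dist_le_pi_dist u 0 j
      have h2 : dist u 0 ≤ 1/(n+1) := mem_closedBall.1 hu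
      have : |u j| ≤ 1/(n+1) := by
        simpa [Real.dist_eq] using h1.trans h2
      calc (u j)^2 = |u j|^2 := (sq_abs _).symm
      _ ≤ (1/(n+1):ℝ)^2 := by
          apply pow_le_pow_left₀ (abs_nonneg _) this
    have hsum : ∑ j, (u j)^2 ≤ 1 := by
      calc ∑ j, (u j)^2 ≤ ∑ _j : Fin n, (1/(n+1):ℝ)^2 :=
            Finset.sum_le_sum fun j _ => hcoord j
      _ = n * (1/(n+1):ℝ)^2 := by simp [Finset.sum_const, mul_comm]
      _ ≤ 1 := by
          have hn : (0:ℝ) ≤ n := Nat.cast_nonneg n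
          rw [div_pow, one_pow, mul_one_div, div_le_one (by positivity)]
          nlinarith
    set t : ℝ := Real.sqrt (1 - ∑ j, (u j)^2) with htdef
    have ht2 : t^2 = 1 - ∑ j, (u j)^2 := Real.sq_sqrt (by linarith)
    refine ⟨(WithLp.toLp 2 ((Fin.last n).insertNth (α := fun _ => ℝ) t u) : E), ?_, ?_⟩
    · rw [mem_sphere_zero_iff_norm, EuclideanSpace.norm_eq]
      have : ∑ k, ‖(Fin.last n).insertNth (α := fun _ => ℝ) t u k‖^2 = 1 := by
        rw [Fin.sum_univ_succAbove (fun k => ‖(Fin.last n).insertNth (α := fun _ => ℝ) t u k‖^2) (Fin.last n)]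
        simp only [Fin.insertNth_apply_same, Fin.insertNth_apply_succAbove,
          Real.norm_eq_abs, sq_abs]
        rw [ht2]; ring
      rw [this, Real.sqrt_one]
    · funext j
      show (Fin.last n).insertNth (α := fun _ => ℝ) t u (Fin.castSucc j) = u j
      rw [← Fin.succAbove_last, Fin.insertNth_apply_succAbove]
  have h1 : (volume : Measure (Fin n → ℝ)) C ≤ (μH[(n:ℝ)] : Measure E) (sphere (0:E) 1) := by
    have hvol : (volume : Measure (Fin n → ℝ)) C = μH[(n:ℝ)] C := by
      rw [← MeasureTheory.hausdorffMeasure_pi_real (ι := Fin n)]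
      norm_num
    rw [hvol]
    calc (μH[(n:ℝ)] : Measure (Fin n → ℝ)) C ≤ μH[(n:ℝ)] (π '' (sphere (0:E) 1)) :=
          measure_mono hsub
    _ ≤ ((1:NNReal):ENNReal)^(n:ℝ) * (μH[(n:ℝ)] : Measure E) (sphere (0:E) 1) :=
          hπ.hausdorffMeasure_image_le (Nat.cast_nonneg n) _
    _ = (μH[(n:ℝ)] : Measure E) (sphere (0:E) 1) := by simp
  refine lt_of_lt_of_le ?_ h1
  exact measure_closedBall_pos volume 0 (by positivity)


lemma insertNth_self (i : Fin (n+1)) (v : E) :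
    (WithLp.toLp 2 (i.insertNth (α := fun _ => ℝ) (v i) (fun j => v (i.succAbove j))) : E) = v := by
  ext k
  rw [PiLp.toLp_apply]
  by_cases hk : k = i
  · subst hk; rw [Fin.insertNth_apply_same]
  · obtain ⟨j, rfl⟩ := Fin.exists_succAbove_eq hk
    rw [Fin.insertNth_apply_succAbove]

lemma hausdorff_sphere_lt_top : (μH[(n:ℝ)] : Measure E) (sphere (0:E) 1) < ⊤ := by
  classical
  set D : Set (Fin n → ℝ) := {u | ∑ j, (u j)^2 ≤ 1 - 1/((n:ℝ)+1)} with hD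
  have hn0 : (0:ℝ) < (n:ℝ) + 1 := by positivity
  set ψ : Fin (n+1) → ℝ → (Fin n → ℝ) → E := fun i ε u =>
    (WithLp.toLp 2 (i.insertNth (α := fun _ => ℝ) (ε * Real.sqrt (1 - ∑ j, (u j)^2)) u) : E) with hψ
  -- bounds on D
  have hDcoord : ∀ u ∈ D, ∀ j, |u j| ≤ 1 := by
    intro u hu j
    rw [← sq_le_one_iff_abs_le_one]
    have h1 : (u j)^2 ≤ ∑ k, (u k)^2 :=
      Finset.single_le_sum (f := fun k => (u k)^2) (fun k _ => sq_nonneg _) (Finset.mem_univ _)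
    have h2 : ∑ k, (u k)^2 ≤ 1 - 1/((n:ℝ)+1) := hu
    have : 1 - 1/((n:ℝ)+1) ≤ 1 := by
      have : 0 < 1/((n:ℝ)+1) := by positivity
      linarith
    linarith
  have hDa : ∀ u ∈ D, 1/((n:ℝ)+1) ≤ 1 - ∑ j, (u j)^2 := by
    intro u hu
    have h2 : ∑ k, (u k)^2 ≤ 1 - 1/((n:ℝ)+1) := hu
    linarith
  -- Lipschitz bound
  have hlip : ∀ (i : Fin (n+1)) (ε : ℝ), |ε| = 1 →
      LipschitzOnWith ((((n+1)^2 : ℕ) : NNReal)) (ψ i ε) D := by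
    intro i ε hε
    apply LipschitzOnWith.of_dist_le_mul
    intro u hu v hv
    set a : ℝ := 1 - ∑ j, (u j)^2 with ha
    set b : ℝ := 1 - ∑ j, (v j)^2 with hb
    have haD : 1/((n:ℝ)+1) ≤ a := hDa u hu
    have hbD : 1/((n:ℝ)+1) ≤ b := hDa v hv
    have ha0 : 0 ≤ a := le_trans (by positivity) haD
    have hb0 : 0 ≤ b := le_trans (by positivity) hbD
    have hdnn : 0 ≤ dist u v := dist_nonneg
    -- |a - b| ≤ 2 n dist u v
    have hab : |a - b| ≤ 2 * (n:ℝ) * dist u v := by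
      have : a - b = ∑ j, ((v j)^2 - (u j)^2) := by
        rw [ha, hb, Finset.sum_sub_distrib]; ring
      rw [this]
      calc |∑ j, ((v j)^2 - (u j)^2)| ≤ ∑ j, |(v j)^2 - (u j)^2| :=
            Finset.abs_sum_le_sum_abs _ _
      _ ≤ ∑ _j : Fin n, 2 * dist u v := by
          apply Finset.sum_le_sum
          intro j _
          have h1 : (v j)^2 - (u j)^2 = (v j + u j) * (v j - u j) := by ring
          rw [h1, abs_mul]
          have h2 : |v j + u j| ≤ 2 := by
            calc |v j + u j| ≤ |v j| + |u j| := abs_add_le _ _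
            _ ≤ 2 := by
                have := hDcoord u hu j; have := hDcoord v hv j; linarith
          have h3 : |v j - u j| ≤ dist u v := by
            rw [← Real.dist_eq, dist_comm]
            exact dist_le_pi_dist u v j
          exact mul_le_mul h2 h3 (abs_nonneg _) (by norm_num)
      _ = 2 * (n:ℝ) * dist u v := by
          rw [Finset.sum_const, Finset.card_univ, Fintype.card_fin, nsmul_eq_mul]; ring
    -- sqrt Lipschitz
    have hsq : |Real.sqrt a - Real.sqrt b| ≤ (n:ℝ) * ((n:ℝ)+1) * dist u v := by
      have hprod : (Real.sqrt a - Real.sqrt b) * (Real.sqrt a + Real.sqrt b) = a - b := by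
        have h1 : Real.sqrt a ^ 2 = a := Real.sq_sqrt ha0
        have h2 : Real.sqrt b ^ 2 = b := Real.sq_sqrt hb0
        nlinarith [h1, h2]
      have hsa : 1/((n:ℝ)+1) ≤ Real.sqrt a := by
        rw [Real.le_sqrt (by positivity) ha0]
        calc (1/((n:ℝ)+1))^2 ≤ 1/((n:ℝ)+1) := by
              rw [div_pow, one_pow]
              apply div_le_div_of_nonneg_left one_pos.le hn0
              nlinarith
        _ ≤ a := haD
      have hsb : 1/((n:ℝ)+1) ≤ Real.sqrt b := by
        rw [Real.le_sqrt (by positivity) hb0]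
        calc (1/((n:ℝ)+1))^2 ≤ 1/((n:ℝ)+1) := by
              rw [div_pow, one_pow]
              apply div_le_div_of_nonneg_left one_pos.le hn0
              nlinarith
        _ ≤ b := hbD
      have habs : |Real.sqrt a - Real.sqrt b| * (Real.sqrt a + Real.sqrt b) = |a - b| := by
        rw [← hprod, abs_mul, abs_of_nonneg (by positivity : (0:ℝ) ≤ Real.sqrt a + Real.sqrt b)]
      have hplus : 2/((n:ℝ)+1) ≤ Real.sqrt a + Real.sqrt b := by
        have : 2/((n:ℝ)+1) = 1/((n:ℝ)+1) + 1/((n:ℝ)+1) := by ring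
        rw [this]; exact add_le_add hsa hsb
      have habs' : |Real.sqrt a - Real.sqrt b| * (2/((n:ℝ)+1)) ≤ 2 * (n:ℝ) * dist u v := by
        calc |Real.sqrt a - Real.sqrt b| * (2/((n:ℝ)+1))
            ≤ |Real.sqrt a - Real.sqrt b| * (Real.sqrt a + Real.sqrt b) :=
              mul_le_mul_of_nonneg_left hplus (abs_nonneg _)
        _ = |a - b| := habs
        _ ≤ 2 * (n:ℝ) * dist u v := hab
      have h2pos : (0:ℝ) < 2/((n:ℝ)+1) := by positivity
      rw [← le_div_iff₀ h2pos] at habs'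
      calc |Real.sqrt a - Real.sqrt b| ≤ 2 * (n:ℝ) * dist u v / (2/((n:ℝ)+1)) := habs'
      _ = (n:ℝ) * ((n:ℝ)+1) * dist u v := by field_simp
    -- assemble
    have hKnn : (0:ℝ) ≤ (((n:ℕ)+1)^2 : ℝ) := by positivity
    rw [EuclideanSpace.dist_eq]
    have hsplit : ∑ k, dist (ψ i ε u k) (ψ i ε v k) ^ 2
        = dist (ε * Real.sqrt a) (ε * Real.sqrt b) ^ 2 + ∑ j, dist (u j) (v j) ^ 2 := by
      rw [Fin.sum_univ_succAbove (fun k => dist (ψ i ε u k) (ψ i ε v k) ^ 2) i]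
      congr 1
      · simp only [hψ, PiLp.toLp_apply, Fin.insertNth_apply_same, ha, hb]
      · refine Finset.sum_congr rfl fun j _ => ?_
        simp only [hψ, PiLp.toLp_apply, Fin.insertNth_apply_succAbove]
    rw [hsplit]
    have h1 : dist (ε * Real.sqrt a) (ε * Real.sqrt b) ^ 2
        ≤ ((n:ℝ) * ((n:ℝ)+1) * dist u v)^2 := by
      rw [Real.dist_eq, ← mul_sub, abs_mul, hε, one_mul]
      apply pow_le_pow_left₀ (abs_nonneg _) hsq
    have h2 : ∑ j, dist (u j) (v j) ^ 2 ≤ (n:ℝ) * dist u v ^ 2 := by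
      calc ∑ j, dist (u j) (v j) ^ 2 ≤ ∑ _j : Fin n, dist u v ^ 2 := by
            apply Finset.sum_le_sum
            intro j _
            exact pow_le_pow_left₀ dist_nonneg (dist_le_pi_dist u v j) 2
      _ = (n:ℝ) * dist u v ^ 2 := by simp [Finset.sum_const, nsmul_eq_mul]
    calc Real.sqrt (dist (ε * Real.sqrt a) (ε * Real.sqrt b) ^ 2 + ∑ j, dist (u j) (v j) ^ 2)
        ≤ Real.sqrt ((((n+1:ℕ):ℝ)^2 * dist u v)^2) := by
          apply Real.sqrt_le_sqrt
          push_cast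
          nlinarith [sq_nonneg (dist u v), Nat.cast_nonneg (α := ℝ) n]
    _ = ((n+1:ℕ):ℝ)^2 * dist u v := by
          rw [Real.sqrt_sq_eq_abs, abs_of_nonneg (by positivity)]
    _ = ↑(((n+1)^2 : ℕ) : NNReal) * dist u v := by push_cast; ring
  -- covering
  have hcover : sphere (0:E) 1 ⊆ ⋃ i : Fin (n+1), (ψ i 1 '' D ∪ ψ i (-1) '' D) := by
    intro ξ hξ
    have hsum := sum_sq_eq_one_of_mem_sphere hξ
    have hex : ∃ i, 1/((n:ℝ)+1) ≤ (ξ i)^2 := by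
      by_contra h
      push_neg at h
      have hlt : ∑ k, (ξ k)^2 < ∑ _k : Fin (n+1), 1/((n:ℝ)+1) :=
        Finset.sum_lt_sum_of_nonempty Finset.univ_nonempty (fun i _ => h i)
      rw [hsum] at hlt
      have : ∑ _k : Fin (n+1), 1/((n:ℝ)+1) = 1 := by
        rw [Finset.sum_const]
        simp [nsmul_eq_mul]
        push_cast
        field_simp
      rw [this] at hlt
      exact lt_irrefl _ hlt
    obtain ⟨i, hi⟩ := hex
    set u : Fin n → ℝ := fun j => ξ (i.succAbove j) with hu
    have husum : ∑ j, (u j)^2 = 1 - (ξ i)^2 := by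
      have h := Fin.sum_univ_succAbove (fun k => (ξ k)^2) i
      rw [hsum] at h
      linarith [h]
    have huD : u ∈ D := by
      simp only [hD, mem_setOf_eq, husum]
      linarith
    have hsq : Real.sqrt (1 - ∑ j, (u j)^2) = |ξ i| := by
      rw [husum]
      have : 1 - (1 - (ξ i)^2) = (ξ i)^2 := by ring
      rw [this, Real.sqrt_sq_eq_abs]
    refine mem_iUnion.2 ⟨i, ?_⟩
    rcases le_or_gt 0 (ξ i) with hpos | hneg
    · left
      refine ⟨u, huD, ?_⟩
      show (WithLp.toLp 2 (i.insertNth (α := fun _ => ℝ) (1 * Real.sqrt (1 - ∑ j, (u j)^2)) u) : E) = ξ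
      rw [one_mul, hsq, abs_of_nonneg hpos]
      exact insertNth_self i ξ
    · right
      refine ⟨u, huD, ?_⟩
      show (WithLp.toLp 2 (i.insertNth (α := fun _ => ℝ) ((-1) * Real.sqrt (1 - ∑ j, (u j)^2)) u) : E) = ξ
      rw [hsq, abs_of_neg hneg]
      have : (-1 : ℝ) * -ξ i = ξ i := by ring
      rw [this]
      exact insertNth_self i ξ
  -- D has finite Hausdorff measure
  have hDfin : (μH[(n:ℝ)] : Measure (Fin n → ℝ)) D < ⊤ := by
    have hDsub : D ⊆ closedBall (0 : Fin n → ℝ) 1 := by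
      intro u hu
      rw [mem_closedBall]
      rw [dist_pi_le_iff zero_le_one]
      intro j
      have := hDcoord u hu j
      simpa [Real.dist_eq] using this
    calc (μH[(n:ℝ)] : Measure (Fin n → ℝ)) D ≤ μH[(n:ℝ)] (closedBall (0 : Fin n → ℝ) 1) :=
          measure_mono hDsub
    _ = volume (closedBall (0 : Fin n → ℝ) 1) := by
        rw [← MeasureTheory.hausdorffMeasure_pi_real (ι := Fin n)]
        norm_num
    _ < ⊤ := measure_closedBall_lt_top
  -- conclude
  have himg : ∀ (i : Fin (n+1)) (ε : ℝ), |ε| = 1 →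
      (μH[(n:ℝ)] : Measure E) (ψ i ε '' D) < ⊤ := by
    intro i ε hε
    calc (μH[(n:ℝ)] : Measure E) (ψ i ε '' D)
        ≤ (((((n+1)^2 : ℕ) : NNReal)) : ENNReal)^(n:ℝ) * (μH[(n:ℝ)] : Measure (Fin n → ℝ)) D :=
          (hlip i ε hε).hausdorffMeasure_image_le (Nat.cast_nonneg n)
    _ < ⊤ := ENNReal.mul_lt_top
          (ENNReal.rpow_lt_top_of_nonneg (Nat.cast_nonneg n) (by simp)) hDfin
  calc (μH[(n:ℝ)] : Measure E) (sphere (0:E) 1)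
      ≤ (μH[(n:ℝ)] : Measure E) (⋃ i : Fin (n+1), (ψ i 1 '' D ∪ ψ i (-1) '' D)) :=
        measure_mono hcover
  _ ≤ ∑ i : Fin (n+1), (μH[(n:ℝ)] : Measure E) (ψ i 1 '' D ∪ ψ i (-1) '' D) :=
        measure_iUnion_fintype_le _ _
  _ < ⊤ := by
      apply ENNReal.sum_lt_top.2
      intro i _
      calc (μH[(n:ℝ)] : Measure E) (ψ i 1 '' D ∪ ψ i (-1) '' D)
          ≤ (μH[(n:ℝ)] : Measure E) (ψ i 1 '' D) + (μH[(n:ℝ)] : Measure E) (ψ i (-1) '' D) :=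
            measure_union_le _ _
      _ < ⊤ := ENNReal.add_lt_top.2
          ⟨himg i 1 (by norm_num), himg i (-1) (by norm_num)⟩


lemma integrableOn_sphere {g : E → ℝ} (hg : ContinuousOn g (sphere (0:E) 1)) :
    IntegrableOn g (sphere (0:E) 1) (μH[(n:ℝ)] : Measure E) := by
  obtain ⟨C, hC⟩ := (isCompact_sphere (0:E) 1).exists_bound_of_continuousOn hg
  refine Integrable.mono' (g := fun _ => C) ?_ ?_ ?_
  · exact integrableOn_const hausdorff_sphere_lt_top.ne enorm_ne_top
  · exact hg.aestronglyMeasurable Metric.isClosed_sphere.measurableSet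
  · exact (ae_restrict_iff' Metric.isClosed_sphere.measurableSet).2 (Filter.Eventually.of_forall hC)

lemma coord_continuous (k : Fin (n+1)) : Continuous (fun ξ : E => ξ k) := by
  exact (EuclideanSpace.proj k : E →L[ℝ] ℝ).continuous

lemma moment1 (i : Fin (n+1)) :
    (∫ ξ in sphere (0:E) 1, ξ i ∂(μH[(n:ℝ)] : Measure E)) = 0 := by
  have h := integral_comp_isometry (reflEquiv i) (reflEquiv_norm i) (fun ξ => ξ i)
  have hfun : ∀ ξ : E, (reflEquiv i ξ) i = -ξ i := fun ξ => by
    rw [reflEquiv_apply, if_pos rfl]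
  simp only [hfun] at h
  rw [integral_neg] at h
  linarith [h]

lemma moment2_off {i j : Fin (n+1)} (hij : i ≠ j) :
    (∫ ξ in sphere (0:E) 1, ξ i * ξ j ∂(μH[(n:ℝ)] : Measure E)) = 0 := by
  have h := integral_comp_isometry (reflEquiv i) (reflEquiv_norm i) (fun ξ => ξ i * ξ j)
  have hfun : ∀ ξ : E, (reflEquiv i ξ) i * (reflEquiv i ξ) j = -(ξ i * ξ j) := fun ξ => by
    rw [reflEquiv_apply, reflEquiv_apply, if_pos rfl, if_neg (fun hc => hij hc.symm)]
    ring
  simp only [hfun] at h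
  rw [integral_neg] at h
  linarith [h]

lemma moment2_diag_eq (i j : Fin (n+1)) :
    (∫ ξ in sphere (0:E) 1, (ξ i)^2 ∂(μH[(n:ℝ)] : Measure E))
      = ∫ ξ in sphere (0:E) 1, (ξ j)^2 ∂(μH[(n:ℝ)] : Measure E) := by
  have h := integral_comp_isometry (swapEquiv i j) (swapEquiv_norm i j) (fun ξ => (ξ i)^2)
  have hfun : ∀ ξ : E, ((swapEquiv i j ξ) i)^2 = (ξ j)^2 := fun ξ => by
    rw [swapEquiv_apply, Equiv.swap_apply_left]
  simp only [hfun] at h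
  exact h.symm

lemma moment2_diag (i : Fin (n+1)) :
    (∫ ξ in sphere (0:E) 1, (ξ i)^2 ∂(μH[(n:ℝ)] : Measure E))
      = ((μH[(n:ℝ)] : Measure E) (sphere (0:E) 1)).toReal / (n+1) := by
  have hint : ∀ k : Fin (n+1), IntegrableOn (fun ξ : E => (ξ k)^2) (sphere (0:E) 1)
      (μH[(n:ℝ)] : Measure E) := fun k =>
    integrableOn_sphere (((coord_continuous k).pow 2).continuousOn)
  have hsum : ∑ k : Fin (n+1), (∫ ξ in sphere (0:E) 1, (ξ k)^2 ∂(μH[(n:ℝ)] : Measure E))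
      = ((μH[(n:ℝ)] : Measure E) (sphere (0:E) 1)).toReal := by
    rw [← integral_finset_sum _ (fun k _ => hint k)]
    rw [setIntegral_congr_fun Metric.isClosed_sphere.measurableSet
      (fun ξ hξ => sum_sq_eq_one_of_mem_sphere hξ)]
    simp [setIntegral_const]; rfl
  have hall : ∀ k : Fin (n+1),
      (∫ ξ in sphere (0:E) 1, (ξ k)^2 ∂(μH[(n:ℝ)] : Measure E))
        = ∫ ξ in sphere (0:E) 1, (ξ i)^2 ∂(μH[(n:ℝ)] : Measure E) :=
    fun k => moment2_diag_eq k i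
  rw [Finset.sum_congr rfl (fun k _ => hall k), Finset.sum_const, Finset.card_univ,
    Fintype.card_fin, nsmul_eq_mul] at hsum
  push_cast at hsum
  rw [eq_div_iff (by positivity : ((n:ℝ)+1) ≠ 0)]
  linarith [hsum]

lemma moment2 (i j : Fin (n+1)) :
    (∫ ξ in sphere (0:E) 1, ξ i * ξ j ∂(μH[(n:ℝ)] : Measure E))
      = if i = j then ((μH[(n:ℝ)] : Measure E) (sphere (0:E) 1)).toReal / (n+1) else 0 := by
  by_cases h : i = j
  · subst h
    rw [if_pos rfl, ← moment2_diag i]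
    congr 1
    funext ξ
    ring
  · rw [if_neg h]
    exact moment2_off h

lemma coord_decomp (ξ : E) : ξ = ∑ k, ξ k • EuclideanSpace.single k (1:ℝ) := by
  have h := (EuclideanSpace.basisFun (Fin (n+1)) ℝ).sum_repr ξ
  simp only [EuclideanSpace.basisFun_repr, EuclideanSpace.basisFun_apply] at h
  exact h.symm

lemma clm_decomp (ℓ : E →L[ℝ] ℝ) (ξ : E) :
    ℓ ξ = ∑ k, ξ k * ℓ (EuclideanSpace.single k (1:ℝ)) := by
  conv_lhs => rw [coord_decomp ξ]
  rw [map_sum]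
  exact Finset.sum_congr rfl fun k _ => by rw [ContinuousLinearMap.map_smul, smul_eq_mul]

lemma integral_clm (ℓ : E →L[ℝ] ℝ) :
    (∫ ξ in sphere (0:E) 1, ℓ ξ ∂(μH[(n:ℝ)] : Measure E)) = 0 := by
  have h : (fun ξ : E => ℓ ξ) = fun ξ : E => ∑ k, ξ k * ℓ (EuclideanSpace.single k (1:ℝ)) :=
    funext (clm_decomp ℓ)
  rw [h, integral_finset_sum _ (fun k _ =>
    integrableOn_sphere (g := fun ξ : E => ξ k * ℓ (EuclideanSpace.single k (1:ℝ)))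
      (((coord_continuous k).mul continuous_const).continuousOn))]
  refine Finset.sum_eq_zero fun k _ => ?_
  rw [integral_mul_const, moment1 k, zero_mul]

lemma integral_bilin (A : E →L[ℝ] E →L[ℝ] ℝ) :
    (∫ ξ in sphere (0:E) 1, A ξ ξ ∂(μH[(n:ℝ)] : Measure E))
      = (((μH[(n:ℝ)] : Measure E) (sphere (0:E) 1)).toReal / (n+1))
        * ∑ k, A (EuclideanSpace.single k (1:ℝ)) (EuclideanSpace.single k (1:ℝ)) := by
  have hpt : ∀ ξ : E, A ξ ξ = ∑ k, ∑ l, (ξ k * ξ l)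
      * A (EuclideanSpace.single k (1:ℝ)) (EuclideanSpace.single l (1:ℝ)) := by
    intro ξ
    have h1 : A ξ ξ = ∑ k, ξ k * (A (EuclideanSpace.single k (1:ℝ)) ξ) := by
      have h0 := clm_decomp (A.flip ξ) ξ
      simpa [ContinuousLinearMap.flip_apply] using h0
    rw [h1]
    refine Finset.sum_congr rfl fun k _ => ?_
    rw [clm_decomp (A (EuclideanSpace.single k (1:ℝ))) ξ, Finset.mul_sum]
    exact Finset.sum_congr rfl fun l _ => by ring
  have h : (fun ξ : E => A ξ ξ) = fun ξ : E => ∑ k, ∑ l, (ξ k * ξ l)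
      * A (EuclideanSpace.single k (1:ℝ)) (EuclideanSpace.single l (1:ℝ)) := funext hpt
  rw [h]
  have hint2 : ∀ (k l : Fin (n+1)), IntegrableOn
      (fun ξ : E => (ξ k * ξ l) * A (EuclideanSpace.single k (1:ℝ)) (EuclideanSpace.single l (1:ℝ)))
      (sphere (0:E) 1) (μH[(n:ℝ)] : Measure E) := fun k l =>
    integrableOn_sphere ((((coord_continuous k).mul (coord_continuous l)).mul
      continuous_const).continuousOn)
  rw [integral_finset_sum _ (fun k _ => integrable_finset_sum _ (fun l _ => hint2 k l))]
  have hins : ∀ k : Fin (n+1), (∫ ξ in sphere (0:E) 1, ∑ l, (ξ k * ξ l)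
      * A (EuclideanSpace.single k (1:ℝ)) (EuclideanSpace.single l (1:ℝ))
      ∂(μH[(n:ℝ)] : Measure E))
      = (((μH[(n:ℝ)] : Measure E) (sphere (0:E) 1)).toReal / (n+1))
        * A (EuclideanSpace.single k (1:ℝ)) (EuclideanSpace.single k (1:ℝ)) := by
    intro k
    rw [integral_finset_sum _ (fun l _ => hint2 k l)]
    have h2 : ∀ l : Fin (n+1), (∫ ξ in sphere (0:E) 1, (ξ k * ξ l)
        * A (EuclideanSpace.single k (1:ℝ)) (EuclideanSpace.single l (1:ℝ))
        ∂(μH[(n:ℝ)] : Measure E))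
        = if k = l then (((μH[(n:ℝ)] : Measure E) (sphere (0:E) 1)).toReal / (n+1))
            * A (EuclideanSpace.single k (1:ℝ)) (EuclideanSpace.single l (1:ℝ)) else 0 := by
      intro l
      rw [integral_mul_const, moment2 k l, ite_mul, zero_mul]
    rw [Finset.sum_congr rfl (fun l _ => h2 l), Finset.sum_ite_eq]
    simp
  rw [Finset.sum_congr rfl (fun k _ => hins k), Finset.mul_sum]


lemma taylor2 {V : Type*} [NormedAddCommGroup V] [NormedSpace ℝ V]
    {g : V → ℝ} {x : V} (hg : ContDiffAt ℝ 2 g x) :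
    (fun v => g (x + v) - g x - fderiv ℝ g x v
        - (1/2) * fderiv ℝ (fderiv ℝ g) x v v) =o[nhds (0:V)] fun v => ‖v‖^2 := by
  set φ : V → (V →L[ℝ] ℝ) := fderiv ℝ g with hφ
  set A : V →L[ℝ] V →L[ℝ] ℝ := fderiv ℝ φ x with hAdef
  have hφ1 : ContDiffAt ℝ 1 φ x := hg.fderiv_right (by norm_num)
  have hA : HasFDerivAt φ A x := (hφ1.differentiableAt (by norm_num)).hasFDerivAt
  have hev : ∀ᶠ y in nhds x, HasFDerivAt g (φ y) y := by
    filter_upwards [hg.eventually (by norm_num)] with y hy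
    exact (hy.differentiableAt (by norm_num)).hasFDerivAt
  have hsym : ∀ v w, A v w = A w v := second_derivative_symmetric_of_eventually hev hA
  have hq : (fun u => φ (x + u) - φ x - A u) =o[nhds (0:V)] (fun u => u) :=
    hasFDerivAt_iff_isLittleO_nhds_zero.1 hA
  rw [isLittleO_iff]
  intro c hc
  have hq' : ∀ᶠ u in nhds (0:V), ‖φ (x + u) - φ x - A u‖ ≤ c * ‖u‖ :=
    isLittleO_iff.1 hq hc
  have htr : Filter.Tendsto (fun u : V => x + u) (nhds 0) (nhds x) := by
    have h0 : Continuous (fun u : V => x + u) := continuous_const.add continuous_id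
    have := h0.tendsto (0:V)
    simpa using this
  have hd' : ∀ᶠ u in nhds (0:V), HasFDerivAt g (φ (x + u)) (x + u) := htr.eventually hev
  obtain ⟨δ, hδpos, hδ⟩ := Metric.eventually_nhds_iff.1 (hq'.and hd')
  have hball : ∀ᶠ v in nhds (0:V), ‖v‖ < δ := by
    have := Metric.ball_mem_nhds (0:V) hδpos
    filter_upwards [this] with v hv
    simpa [dist_zero_right] using hv
  filter_upwards [hball] with v hv
  -- the function G and its derivative
  set G : V → ℝ := fun u => g (x + u) - g x - φ x u - (1/2) * A u u with hG
  have hGd : ∀ u ∈ closedBall (0:V) ‖v‖,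
      HasFDerivWithinAt G (φ (x + u) - φ x - A u) (closedBall (0:V) ‖v‖) u := by
    intro u hu
    have hu' : dist u (0:V) < δ := by
      rw [dist_zero_right]
      rw [mem_closedBall, dist_zero_right] at hu
      exact lt_of_le_of_lt hu hv
    have h1 : HasFDerivAt (fun u : V => g (x + u)) (φ (x + u)) u := by
      have hcomp : HasFDerivAt (fun u : V => x + u) (ContinuousLinearMap.id ℝ V) u :=
        (hasFDerivAt_id u).const_add x
      have := ((hδ hu').2).comp u hcomp
      exact this
    have h2 : HasFDerivAt (fun u : V => φ x u) (φ x) u := (φ x).hasFDerivAt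
    have h3 : HasFDerivAt (fun y : V => A y y)
        ((A u).comp (ContinuousLinearMap.id ℝ V) + A.flip u) u :=
      (A.hasFDerivAt).clm_apply (hasFDerivAt_id u)
    have h4 : HasFDerivAt G
        (φ (x + u) - φ x - (1/2 : ℝ) • ((A u).comp (ContinuousLinearMap.id ℝ V) + A.flip u)) u :=
      ((h1.sub_const (g x)).sub h2).sub (h3.const_mul (1/2))
    have heq : (φ (x + u) - φ x - (1/2 : ℝ) • ((A u).comp (ContinuousLinearMap.id ℝ V) + A.flip u))
        = φ (x + u) - φ x - A u := by
      ext w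
      simp only [ContinuousLinearMap.sub_apply, ContinuousLinearMap.smul_apply,
        ContinuousLinearMap.add_apply, ContinuousLinearMap.comp_apply,
        ContinuousLinearMap.coe_id', id_eq, ContinuousLinearMap.flip_apply, smul_eq_mul]
      rw [hsym w u]
      ring
    rw [heq] at h4
    exact h4.hasFDerivWithinAt
  have hbound : ∀ u ∈ closedBall (0:V) ‖v‖, ‖φ (x + u) - φ x - A u‖ ≤ c * ‖v‖ := by
    intro u hu
    rw [mem_closedBall, dist_zero_right] at hu
    have hu' : dist u (0:V) < δ := by
      rw [dist_zero_right]; exact lt_of_le_of_lt hu hv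
    calc ‖φ (x + u) - φ x - A u‖ ≤ c * ‖u‖ := (hδ hu').1
    _ ≤ c * ‖v‖ := by
        apply mul_le_mul_of_nonneg_left hu hc.le
  have hkey := Convex.norm_image_sub_le_of_norm_hasFDerivWithin_le hGd hbound
    (convex_closedBall (0:V) ‖v‖) (mem_closedBall_self (norm_nonneg v))
    (by rw [mem_closedBall, dist_zero_right] : v ∈ closedBall (0:V) ‖v‖)
  have hG0 : G 0 = 0 := by simp [hG]
  rw [hG0, sub_zero, sub_zero] at hkey
  calc ‖g (x + v) - g x - fderiv ℝ g x v - (1/2) * fderiv ℝ (fderiv ℝ g) x v v‖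
      = ‖G v‖ := rfl
  _ ≤ c * ‖v‖ * ‖v‖ := hkey
  _ = c * ‖‖v‖^2‖ := by
      rw [Real.norm_of_nonneg (by positivity : (0:ℝ) ≤ ‖v‖^2)]
      ring

lemma cont_ball {V : Type*} [NormedAddCommGroup V] [NormedSpace ℝ V]
    {g : V → ℝ} {x : V} (hg : ContDiffAt ℝ 2 g x) :
    ∃ ε > 0, ContinuousOn g (ball x ε) := by
  obtain ⟨u, hu, hcd⟩ := hg.contDiffOn le_rfl (by simp)
  obtain ⟨ε, hε, hsub⟩ := Metric.mem_nhds_iff.1 hu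
  exact ⟨ε, hε, (hcd.continuousOn).mono hsub⟩

lemma maps_into_ball {x : E} {r ε : ℝ} (hr : |r| < ε) :
    ∀ ξ ∈ sphere (0:E) 1, x + r • ξ ∈ ball x ε := by
  intro ξ hξ
  rw [mem_ball, dist_eq_norm]
  have h1 : x + r • ξ - x = r • ξ := by abel
  rw [h1, norm_smul, Real.norm_eq_abs, mem_sphere_zero_iff_norm.1 hξ, mul_one]
  exact hr

lemma sphere_expansion {g : E → ℝ} {x : E} (hg : ContDiffAt ℝ 2 g x) :
    (fun r : ℝ => (∫ ξ in sphere (0:E) 1, g (x + r • ξ) ∂(μH[(n:ℝ)] : Measure E))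
        - ((μH[(n:ℝ)] : Measure E) (sphere (0:E) 1)).toReal * g x
        - (((μH[(n:ℝ)] : Measure E) (sphere (0:E) 1)).toReal / (2*((n:ℝ)+1))
            * ∑ i, fderiv ℝ (fderiv ℝ g) x (EuclideanSpace.single i (1:ℝ))
                (EuclideanSpace.single i (1:ℝ))) * r^2)
      =o[nhds (0:ℝ)] fun r => r^2 := by
  obtain ⟨ε₀, hε₀, hcont⟩ := cont_ball hg
  set S : Set E := sphere (0:E) 1 with hS
  set νR : ℝ := ((μH[(n:ℝ)] : Measure E) S).toReal with hνR
  have hνRnn : 0 ≤ νR := ENNReal.toReal_nonneg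
  set Dg : E →L[ℝ] ℝ := fderiv ℝ g x with hDg
  set A : E →L[ℝ] E →L[ℝ] ℝ := fderiv ℝ (fderiv ℝ g) x with hA
  set T : ℝ := ∑ i, A (EuclideanSpace.single i (1:ℝ)) (EuclideanSpace.single i (1:ℝ)) with hT
  set Gf : E → ℝ := fun v => g (x + v) - g x - Dg v - (1/2) * A v v with hGf
  -- continuity of the composed maps for small r
  have hcomp : ∀ r : ℝ, |r| < ε₀ → ContinuousOn (fun ξ : E => g (x + r • ξ)) S := by
    intro r hr
    apply hcont.comp ((continuous_const.add (continuous_id.const_smul r)).continuousOn)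
    intro ξ hξ
    exact maps_into_ball hr ξ hξ
  -- the exact integral identity
  have hiden : ∀ r : ℝ, |r| < ε₀ →
      (∫ ξ in S, g (x + r • ξ) ∂(μH[(n:ℝ)] : Measure E)) - νR * g x
        - (νR / (2*((n:ℝ)+1)) * T) * r^2
      = ∫ ξ in S, Gf (r • ξ) ∂(μH[(n:ℝ)] : Measure E) := by
    intro r hr
    have hsm : Continuous (fun ξ : E => r • ξ) := continuous_id.const_smul r
    have hDgc : Continuous (fun ξ : E => Dg (r • ξ)) := Dg.continuous.comp hsm
    have hAc : Continuous (fun ξ : E => A (r • ξ) (r • ξ)) :=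
      (A.isBoundedBilinearMap.continuous).comp (hsm.prodMk hsm)
    have hPoly : Continuous (fun ξ : E => g x + Dg (r • ξ) + (1/2) * A (r • ξ) (r • ξ)) :=
      (continuous_const.add hDgc).add (continuous_const.mul hAc)
    have hint1 : IntegrableOn (fun ξ : E => g (x + r • ξ)) S (μH[(n:ℝ)] : Measure E) :=
      integrableOn_sphere (hcomp r hr)
    have hint2 : IntegrableOn (fun ξ : E => g x + Dg (r • ξ) + (1/2) * A (r • ξ) (r • ξ)) S
        (μH[(n:ℝ)] : Measure E) := integrableOn_sphere hPoly.continuousOn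
    have hGsub : ∀ ξ : E, Gf (r • ξ)
        = g (x + r • ξ) - (g x + Dg (r • ξ) + (1/2) * A (r • ξ) (r • ξ)) := by
      intro ξ; simp only [hGf]; ring
    have h1 : (∫ ξ in S, Gf (r • ξ) ∂(μH[(n:ℝ)] : Measure E))
        = (∫ ξ in S, g (x + r • ξ) ∂(μH[(n:ℝ)] : Measure E))
          - ∫ ξ in S, (g x + Dg (r • ξ) + (1/2) * A (r • ξ) (r • ξ)) ∂(μH[(n:ℝ)] : Measure E) := by
      rw [← integral_sub hint1 hint2]
      exact integral_congr_ae (Filter.Eventually.of_forall (fun ξ => hGsub ξ))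
    have h2 : (∫ ξ in S, (g x + Dg (r • ξ) + (1/2) * A (r • ξ) (r • ξ))
          ∂(μH[(n:ℝ)] : Measure E))
        = νR * g x + (νR / (2*((n:ℝ)+1)) * T) * r^2 := by
      have ha : IntegrableOn (fun _ : E => g x) S (μH[(n:ℝ)] : Measure E) :=
        integrableOn_sphere continuousOn_const
      have hb : IntegrableOn (fun ξ : E => Dg (r • ξ)) S (μH[(n:ℝ)] : Measure E) :=
        integrableOn_sphere hDgc.continuousOn
      have hc : IntegrableOn (fun ξ : E => (1/2) * A (r • ξ) (r • ξ)) S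
          (μH[(n:ℝ)] : Measure E) :=
        integrableOn_sphere (continuous_const.mul hAc).continuousOn
      have hab : IntegrableOn (fun ξ : E => g x + Dg (r • ξ)) S (μH[(n:ℝ)] : Measure E) := by
        have h := ha.add hb; exact h
      rw [integral_add hab hc, integral_add ha hb]
      have e1 : (∫ _ξ in S, g x ∂(μH[(n:ℝ)] : Measure E)) = νR * g x := by
        rw [setIntegral_const, smul_eq_mul]; rfl
      have e2 : (∫ ξ in S, Dg (r • ξ) ∂(μH[(n:ℝ)] : Measure E)) = 0 := by
        have hpt : (fun ξ : E => Dg (r • ξ)) = fun ξ : E => r * Dg ξ := by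
          funext ξ; rw [ContinuousLinearMap.map_smul, smul_eq_mul]
        rw [hpt, integral_const_mul, integral_clm Dg, mul_zero]
      have e3 : (∫ ξ in S, (1/2) * A (r • ξ) (r • ξ) ∂(μH[(n:ℝ)] : Measure E))
          = (νR / (2*((n:ℝ)+1)) * T) * r^2 := by
        have hpt : (fun ξ : E => (1/2) * A (r • ξ) (r • ξ))
            = fun ξ : E => (1/2 * r^2) * A ξ ξ := by
          funext ξ
          simp only [ContinuousLinearMap.map_smul, ContinuousLinearMap.smul_apply, smul_eq_mul]
          ring
        rw [hpt, integral_const_mul, integral_bilin A, ← hT, ← hνR]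
        field_simp
      rw [e1, e2, e3]
      ring
    rw [h1, h2]
    ring
  -- the little-o bound
  rw [isLittleO_iff]
  intro c hc
  have hc' : 0 < c / (νR + 1) := by positivity
  have htay := isLittleO_iff.1 (taylor2 hg) hc'
  obtain ⟨δ, hδpos, hδ⟩ := Metric.eventually_nhds_iff.1 htay
  have hev : ∀ᶠ r : ℝ in nhds 0, |r| < min δ ε₀ := by
    have : Ioo (-(min δ ε₀)) (min δ ε₀) ∈ nhds (0:ℝ) := by
      apply Ioo_mem_nhds <;> simp [hδpos, hε₀]
    filter_upwards [this] with r hr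
    rw [abs_lt]; exact ⟨hr.1, hr.2⟩
  filter_upwards [hev] with r hr
  have hrδ : |r| < δ := lt_of_lt_of_le hr (min_le_left _ _)
  have hrε : |r| < ε₀ := lt_of_lt_of_le hr (min_le_right _ _)
  rw [hiden r hrε]
  have hptbd : ∀ ξ ∈ S, ‖Gf (r • ξ)‖ ≤ (c / (νR + 1)) * r^2 := by
    intro ξ hξ
    have hnorm : ‖r • ξ‖ = |r| := by
      rw [norm_smul, Real.norm_eq_abs, mem_sphere_zero_iff_norm.1 hξ, mul_one]
    have hd : dist (r • ξ) (0:E) < δ := by rw [dist_zero_right, hnorm]; exact hrδ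
    have := hδ hd
    rw [hnorm] at this
    calc ‖Gf (r • ξ)‖ ≤ (c / (νR + 1)) * ‖|r|^2‖ := this
    _ = (c / (νR + 1)) * r^2 := by
        rw [Real.norm_of_nonneg (by positivity), sq_abs]
  have hmeas : AEStronglyMeasurable (fun ξ : E => Gf (r • ξ))
      ((μH[(n:ℝ)] : Measure E).restrict S) := by
    have hcontG : ContinuousOn (fun ξ : E => Gf (r • ξ)) S := by
      have h1 := hcomp r hrε
      have hsm : Continuous (fun ξ : E => r • ξ) := continuous_id.const_smul r
      have h2 : Continuous (fun ξ : E => g x + Dg (r • ξ) + (1/2) * A (r • ξ) (r • ξ)) :=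
        (continuous_const.add (Dg.continuous.comp hsm)).add (continuous_const.mul
          ((A.isBoundedBilinearMap.continuous).comp (hsm.prodMk hsm)))
      have : (fun ξ : E => Gf (r • ξ))
          = fun ξ : E => g (x + r • ξ) - (g x + Dg (r • ξ) + (1/2) * A (r • ξ) (r • ξ)) := by
        funext ξ; simp only [hGf]; ring
      rw [this]
      exact h1.sub h2.continuousOn
    exact hcontG.aestronglyMeasurable Metric.isClosed_sphere.measurableSet
  calc ‖∫ ξ in S, Gf (r • ξ) ∂(μH[(n:ℝ)] : Measure E)‖
      ≤ (c / (νR + 1)) * r^2 * νR :=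
        norm_setIntegral_le_of_norm_le_const hausdorff_sphere_lt_top hptbd
  _ ≤ c * ‖r^2‖ := by
      rw [Real.norm_of_nonneg (sq_nonneg r)]
      have h1 : (c / (νR + 1)) * νR ≤ c := by
        rw [div_mul_eq_mul_div, div_le_iff₀ (by positivity)]
        exact mul_le_mul_of_nonneg_left (by linarith) hc.le
      calc (c / (νR + 1)) * r^2 * νR = ((c / (νR + 1)) * νR) * r^2 := by ring
      _ ≤ c * r^2 := mul_le_mul_of_nonneg_right h1 (sq_nonneg r)


lemma second_deriv_prod {V : Type*} [NormedAddCommGroup V] [NormedSpace ℝ V]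
    {f μ : V → ℝ} {x : V} (hf : ContDiffAt ℝ 2 f x) (hμ : ContDiffAt ℝ 2 μ x) (v w : V) :
    fderiv ℝ (fderiv ℝ (fun y => (μ y - μ x) * f y)) x v w
      = fderiv ℝ μ x v * fderiv ℝ f x w + fderiv ℝ f x v * fderiv ℝ μ x w
        + f x * fderiv ℝ (fderiv ℝ μ) x v w := by
  have hev : fderiv ℝ (fun y => (μ y - μ x) * f y)
      =ᶠ[nhds x] fun y => (μ y - μ x) • fderiv ℝ f y + f y • fderiv ℝ μ y := by
    filter_upwards [hf.eventually (by norm_num), hμ.eventually (by norm_num)] with y hfy hμy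
    have hdf : DifferentiableAt ℝ f y := hfy.differentiableAt (by norm_num)
    have hdμ : DifferentiableAt ℝ μ y := hμy.differentiableAt (by norm_num)
    have hdc : DifferentiableAt ℝ (fun z => μ z - μ x) y := hdμ.sub_const _
    rw [fderiv_fun_mul hdc hdf, fderiv_sub_const]
  rw [hev.fderiv_eq]
  have hF : HasFDerivAt (fderiv ℝ f) (fderiv ℝ (fderiv ℝ f) x) x :=
    ((hf.fderiv_right (by norm_num : (1:WithTop ℕ∞) + 1 ≤ 2)).differentiableAt
      (by norm_num)).hasFDerivAt
  have hM : HasFDerivAt (fderiv ℝ μ) (fderiv ℝ (fderiv ℝ μ) x) x :=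
    ((hμ.fderiv_right (by norm_num : (1:WithTop ℕ∞) + 1 ≤ 2)).differentiableAt
      (by norm_num)).hasFDerivAt
  have hfd : HasFDerivAt f (fderiv ℝ f x) x :=
    (hf.differentiableAt (by norm_num)).hasFDerivAt
  have hμd : HasFDerivAt (fun y => μ y - μ x) (fderiv ℝ μ x) x := by
    have h := (hμ.differentiableAt (by norm_num)).hasFDerivAt
    exact h.sub_const _
  have h1 : HasFDerivAt (fun y => (μ y - μ x) • fderiv ℝ f y)
      ((μ x - μ x) • fderiv ℝ (fderiv ℝ f) x
        + (fderiv ℝ μ x).smulRight (fderiv ℝ f x)) x := hμd.smul hF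
  have h2 : HasFDerivAt (fun y => f y • fderiv ℝ μ y)
      (f x • fderiv ℝ (fderiv ℝ μ) x
        + (fderiv ℝ f x).smulRight (fderiv ℝ μ x)) x := hfd.smul hM
  have h12 : HasFDerivAt (fun y => (μ y - μ x) • fderiv ℝ f y + f y • fderiv ℝ μ y) _ x :=
    h1.add h2
  rw [h12.fderiv]
  simp only [sub_self, zero_smul, zero_add, ContinuousLinearMap.add_apply,
    ContinuousLinearMap.smulRight_apply, ContinuousLinearMap.smul_apply, smul_eq_mul]
  ring


end SphereExp
end SphereExpAll

open SphereExp in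
theorem sphere_average_regression_expansion (d : ℕ) (hd : 0 < d)
    (f μ : EuclideanSpace ℝ (Fin d) → ℝ) (x : EuclideanSpace ℝ (Fin d))
    (hf : ContDiffAt ℝ 2 f x) (hμ : ContDiffAt ℝ 2 μ x) (hfx : 0 < f x) :
    (fun r : ℝ =>
        (∫ ξ in Metric.sphere (0 : EuclideanSpace ℝ (Fin d)) 1,
            μ (x + r • ξ) * f (x + r • ξ)
            ∂(μH[(d : ℝ) - 1] : Measure (EuclideanSpace ℝ (Fin d)))) /
          (∫ ξ in Metric.sphere (0 : EuclideanSpace ℝ (Fin d)) 1,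
            f (x + r • ξ)
            ∂(μH[(d : ℝ) - 1] : Measure (EuclideanSpace ℝ (Fin d)))) -
          μ x -
          ((f x * (∑ i, iteratedFDeriv ℝ 2 μ x
                ![EuclideanSpace.single i 1, EuclideanSpace.single i 1]) +
              2 * ∑ i, fderiv ℝ μ x (EuclideanSpace.single i 1) *
                fderiv ℝ f x (EuclideanSpace.single i 1)) /
            (2 * d * f x)) * r ^ 2)
      =o[nhdsWithin 0 (Set.Ioi 0)] fun r : ℝ => r ^ 2 := by
  obtain ⟨n, rfl⟩ : ∃ n, d = n + 1 := ⟨d - 1, (Nat.succ_pred_eq_of_pos hd).symm⟩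
  have hcast : ((n+1:ℕ):ℝ) - 1 = (n:ℝ) := by push_cast; ring
  rw [hcast]
  set S : Set (EuclideanSpace ℝ (Fin (n+1))) :=
    Metric.sphere (0 : EuclideanSpace ℝ (Fin (n+1))) 1 with hSdef
  set νR : ℝ := ((μH[(n:ℝ)] : Measure (EuclideanSpace ℝ (Fin (n+1)))) S).toReal with hνRdef
  have hνRpos : 0 < νR :=
    ENNReal.toReal_pos hausdorff_sphere_pos.ne' hausdorff_sphere_lt_top.ne
  -- notation for the two integrals and the constant
  set F : ℝ → ℝ := fun r => ∫ ξ in S, f (x + r • ξ)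
    ∂(μH[(n:ℝ)] : Measure (EuclideanSpace ℝ (Fin (n+1)))) with hFdef
  set I₁ : ℝ → ℝ := fun r => ∫ ξ in S, μ (x + r • ξ) * f (x + r • ξ)
    ∂(μH[(n:ℝ)] : Measure (EuclideanSpace ℝ (Fin (n+1)))) with hI₁def
  set g : EuclideanSpace ℝ (Fin (n+1)) → ℝ := fun y => (μ y - μ x) * f y with hgdef
  set Ig : ℝ → ℝ := fun r => ∫ ξ in S, g (x + r • ξ)
    ∂(μH[(n:ℝ)] : Measure (EuclideanSpace ℝ (Fin (n+1)))) with hIgdef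
  have hg : ContDiffAt ℝ 2 g x := (hμ.sub contDiffAt_const).mul hf
  have hgx : g x = 0 := by simp [hgdef]
  set Tμ : ℝ := ∑ i, fderiv ℝ (fderiv ℝ μ) x (EuclideanSpace.single i (1:ℝ))
    (EuclideanSpace.single i (1:ℝ)) with hTμdef
  set Sig : ℝ := ∑ i, fderiv ℝ μ x (EuclideanSpace.single i (1:ℝ))
    * fderiv ℝ f x (EuclideanSpace.single i (1:ℝ)) with hSigdef
  set Tf : ℝ := ∑ i, fderiv ℝ (fderiv ℝ f) x (EuclideanSpace.single i (1:ℝ))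
    (EuclideanSpace.single i (1:ℝ)) with hTfdef
  -- the second derivative of g
  have hTg : (∑ i, fderiv ℝ (fderiv ℝ g) x (EuclideanSpace.single i (1:ℝ))
      (EuclideanSpace.single i (1:ℝ))) = f x * Tμ + 2 * Sig := by
    rw [Finset.sum_congr rfl (fun i _ => second_deriv_prod hf hμ _ _)]
    rw [Finset.sum_add_distrib, Finset.sum_add_distrib, ← Finset.mul_sum]
    have h1 : (∑ i, fderiv ℝ f x (EuclideanSpace.single i (1:ℝ))
        * fderiv ℝ μ x (EuclideanSpace.single i (1:ℝ))) = Sig :=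
      Finset.sum_congr rfl (fun i _ => mul_comm _ _)
    rw [h1, hSigdef, hTμdef]
    ring
  -- expansions
  set cN : ℝ := νR / (2*((n:ℝ)+1)) * (f x * Tμ + 2 * Sig) with hcNdef
  set cF : ℝ := νR / (2*((n:ℝ)+1)) * Tf with hcFdef
  have hNg : (fun r : ℝ => Ig r - cN * r^2) =o[nhds (0:ℝ)] (fun r => r^2) := by
    have h := sphere_expansion hg
    rw [hgx, hTg] at h
    simpa [hcNdef] using h
  have hFexp : (fun r : ℝ => F r - νR * f x - cF * r^2) =o[nhds (0:ℝ)] (fun r => r^2) := by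
    have h := sphere_expansion hf
    simpa [hcFdef] using h
  -- F tends to νR * f x
  have hr2 : Filter.Tendsto (fun r : ℝ => r^2) (nhds 0) (nhds 0) := by
    have := (continuous_pow 2).tendsto (0:ℝ); simpa using this
  have hFtend : Filter.Tendsto F (nhds 0) (nhds (νR * f x)) := by
    have h0 : Filter.Tendsto (fun r : ℝ => F r - νR * f x - cF * r^2) (nhds 0) (nhds 0) :=
      hFexp.isBigO.trans_tendsto hr2
    have h1 : Filter.Tendsto (fun r : ℝ => cF * r^2) (nhds 0) (nhds 0) := by
      have := hr2.const_mul cF; simpa using this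
    have h2 := (h0.add h1).add (tendsto_const_nhds (x := νR * f x))
    have hfun : (fun r : ℝ => (F r - νR * f x - cF * r^2) + cF * r^2 + νR * f x) = F :=
      funext fun r => by ring
    rw [hfun] at h2
    simpa using h2
  have hFpos : ∀ᶠ r in nhdsWithin (0:ℝ) (Set.Ioi 0), 0 < F r :=
    (hFtend.mono_left nhdsWithin_le_nhds).eventually
      (eventually_gt_nhds (by positivity : (0:ℝ) < νR * f x))
  -- splitting the numerator
  obtain ⟨εf, hεf, hcontf⟩ := cont_ball hf
  obtain ⟨εμ, hεμ, hcontμ⟩ := cont_ball hμ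
  have hsmall : ∀ᶠ r in nhdsWithin (0:ℝ) (Set.Ioi 0), |r| < min εf εμ := by
    apply Filter.Eventually.filter_mono nhdsWithin_le_nhds
    have : Set.Ioo (-(min εf εμ)) (min εf εμ) ∈ nhds (0:ℝ) := by
      apply Ioo_mem_nhds <;> simp [hεf, hεμ]
    filter_upwards [this] with r hr
    rw [abs_lt]; exact ⟨hr.1, hr.2⟩
  have hsplit : ∀ᶠ r in nhdsWithin (0:ℝ) (Set.Ioi 0), Ig r = I₁ r - μ x * F r := by
    filter_upwards [hsmall] with r hr
    have hrf : |r| < εf := lt_of_lt_of_le hr (min_le_left _ _)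
    have hrμ : |r| < εμ := lt_of_lt_of_le hr (min_le_right _ _)
    have hmap : Continuous (fun ξ : EuclideanSpace ℝ (Fin (n+1)) => x + r • ξ) :=
      continuous_const.add (continuous_id.const_smul r)
    have hcf : ContinuousOn (fun ξ : EuclideanSpace ℝ (Fin (n+1)) => f (x + r • ξ)) S :=
      hcontf.comp hmap.continuousOn (fun ξ hξ => maps_into_ball hrf ξ hξ)
    have hcμ : ContinuousOn (fun ξ : EuclideanSpace ℝ (Fin (n+1)) => μ (x + r • ξ)) S :=
      hcontμ.comp hmap.continuousOn (fun ξ hξ => maps_into_ball hrμ ξ hξ)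
    have hint1 : IntegrableOn (fun ξ : EuclideanSpace ℝ (Fin (n+1)) =>
        μ (x + r • ξ) * f (x + r • ξ)) S _ := integrableOn_sphere (hcμ.mul hcf)
    have hint2 : IntegrableOn (fun ξ : EuclideanSpace ℝ (Fin (n+1)) =>
        μ x * f (x + r • ξ)) S _ := integrableOn_sphere (continuousOn_const.mul hcf)
    have hpt : (fun ξ : EuclideanSpace ℝ (Fin (n+1)) => g (x + r • ξ))
        = fun ξ => μ (x + r • ξ) * f (x + r • ξ) - μ x * f (x + r • ξ) := by
      funext ξ; simp only [hgdef]; ring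
    show Ig r = I₁ r - μ x * F r
    rw [hIgdef, hI₁def, hFdef]
    simp only
    rw [hpt, integral_sub hint1 hint2, integral_const_mul]
  -- the constant L
  set L : ℝ := (f x * (∑ i, iteratedFDeriv ℝ 2 μ x
      ![EuclideanSpace.single i 1, EuclideanSpace.single i 1]) +
      2 * ∑ i, fderiv ℝ μ x (EuclideanSpace.single i 1) *
        fderiv ℝ f x (EuclideanSpace.single i 1)) / (2 * ((n+1:ℕ):ℝ) * f x) with hLdef
  have hIter : (∑ i, iteratedFDeriv ℝ 2 μ x
      ![EuclideanSpace.single i 1, EuclideanSpace.single i 1]) = Tμ := by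
    refine Finset.sum_congr rfl fun i _ => ?_
    rw [iteratedFDeriv_two_apply]
    simp [Matrix.cons_val_zero, Matrix.cons_val_one, Matrix.head_cons]
  have hL : L * (νR * f x) = cN := by
    rw [hLdef, hIter, hcNdef]
    have hfx' : f x ≠ 0 := hfx.ne'
    have h1 : ((n+1:ℕ):ℝ) = (n:ℝ) + 1 := by push_cast; ring
    rw [h1]
    field_simp
    ring
  -- assemble the little-o
  have hO : (fun r : ℝ => F r - νR * f x) =O[nhds (0:ℝ)] (fun r => r^2) := by
    have hO1 : (fun r : ℝ => cF * r^2) =O[nhds (0:ℝ)] (fun r => r^2) :=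
      (isBigO_refl (fun r : ℝ => r^2) _).const_mul_left cF
    have h := hFexp.isBigO.add hO1
    have heqf : (fun r : ℝ => (F r - νR * f x - cF * r^2) + cF * r^2)
        = fun r : ℝ => F r - νR * f x := funext fun r => by ring
    rwa [heqf] at h
  have hsmallL : (fun r : ℝ => L * r^2) =o[nhdsWithin (0:ℝ) (Set.Ioi 0)]
      (fun _ => (1:ℝ)) := by
    rw [isLittleO_one_iff]
    apply Filter.Tendsto.mono_left _ nhdsWithin_le_nhds
    have := hr2.const_mul L; simpa using this
  have hb : (fun r : ℝ => L * r^2 * (F r - νR * f x)) =o[nhdsWithin (0:ℝ) (Set.Ioi 0)]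
      (fun r => r^2) := by
    have h := hsmallL.mul_isBigO (hO.mono nhdsWithin_le_nhds)
    have heq1 : (fun r : ℝ => (1:ℝ) * r^2) = fun r : ℝ => r^2 := funext fun r => one_mul _
    rwa [heq1] at h
  have hnum : (fun r : ℝ => (Ig r - cN * r^2) - L * r^2 * (F r - νR * f x))
      =o[nhdsWithin (0:ℝ) (Set.Ioi 0)] (fun r => r^2) :=
    (hNg.mono nhdsWithin_le_nhds).sub hb
  have hinvO : (fun r : ℝ => (F r)⁻¹) =O[nhdsWithin (0:ℝ) (Set.Ioi 0)]
      (fun _ => (1:ℝ)) := by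
    have htend := (hFtend.mono_left (nhdsWithin_le_nhds
      (s := Set.Ioi (0:ℝ)))).inv₀ (by positivity : νR * f x ≠ 0)
    exact htend.isBigO_one ℝ
  have hfinal := hnum.mul_isBigO hinvO
  have heq2 : (fun r : ℝ => r^2 * (1:ℝ)) = fun r : ℝ => r^2 := funext fun r => mul_one _
  rw [heq2] at hfinal
  -- identify the target function
  have heqev : ∀ᶠ r in nhdsWithin (0:ℝ) (Set.Ioi 0),
      ((Ig r - cN * r^2) - L * r^2 * (F r - νR * f x)) * (F r)⁻¹
        = I₁ r / F r - μ x - L * r^2 := by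
    filter_upwards [hsplit, hFpos] with r h1 h2
    have hFne : F r ≠ 0 := h2.ne'
    rw [h1, ← hL]
    field_simp
    ring
  exact hfinal.congr' heqev (Filter.EventuallyEq.refl _ _)
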